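/- Let C ⊆ {-1,1}^d be a multi-connected set, viewed as a subset of the vertices of the hypercube [-1,1]^d. Let F be a d'-dimensional face of the hypercube and let f^F : F → {-1,1}^{d'} be the map deleting the coordinates constant on F. Then f^F(C ∩ F) is multi-connected as a subset of {-1,1}^{d'}. -/
import Mathlib


/-- Two vertices of the hypercube `{-1,1}^d` (encoded by `Bool`s) are adjacent
iff they differ in exactly one coordinate. -/
def cubeAdj {d : ℕ} (x y : Fin d → Bool) : Prop := ∃! i, x i ≠ y i

/-- The face of the hypercube with free coordinates `free`, the other coordinates
being fixed to the values of `x0`. -/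
def cubeFace {d : ℕ} (free : Finset (Fin d)) (x0 : Fin d → Bool) : Set (Fin d → Bool) :=
  {x | ∀ i ∉ free, x i = x0 i}

/-- The vertices of `S` are pairwise connected by paths lying entirely inside `S`. -/
def ConnIn {d : ℕ} (S : Set (Fin d → Bool)) : Prop :=
  ∀ x ∈ S, ∀ y ∈ S, Relation.ReflTransGen (fun a b => b ∈ S ∧ cubeAdj a b) x y

/-- Conditions (2) and (3) of multi-connectivity: for every face `F` of the hypercube,
both `C ∩ F` and `F \ C` are connected by edges of `F`. -/
def FaceConds {d : ℕ} (C : Set (Fin d → Bool)) : Prop :=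
  ∀ (free : Finset (Fin d)) (x0 : Fin d → Bool),
    ConnIn (C ∩ cubeFace free x0) ∧ ConnIn (cubeFace free x0 \ C)

/-- `C ⊆ {-1,1}^d` is multi-connected: `C` is empty or some `g ∈ C` can be removed
leaving a multi-connected set, and for every face `F` both `C ∩ F` and `F \ C` are
connected inside `F`. -/
inductive MultiConnected {d : ℕ} : Set (Fin d → Bool) → Prop
  | empty : FaceConds (∅ : Set (Fin d → Bool)) → MultiConnected ∅
  | step (C : Set (Fin d → Bool)) (g : Fin d → Bool) (hg : g ∈ C)
      (h : MultiConnected (C \ {g})) (hf : FaceConds C) : MultiConnected C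

open Classical in
/-- The involution of the hypercube mapping each vertex of the face to its antipode
within the face, and fixing all vertices outside the face. -/
noncomputable def flipFace {d : ℕ} (free : Finset (Fin d)) (x0 : Fin d → Bool)
    (x : Fin d → Bool) : Fin d → Bool :=
  if x ∈ cubeFace free x0 then (fun i => if i ∈ free then !(x i) else x i) else x

/-- `C ⊆ {-1,1}^d` is lopsided (totally asymmetric): whenever the antipodal involution
of a face preserves `C`, the face is fully contained in `C` or disjoint from `C`. -/
def Lopsided {d : ℕ} (C : Set (Fin d → Bool)) : Prop :=
  ∀ (free : Finset (Fin d)) (x0 : Fin d → Bool),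
    flipFace free x0 '' C = C → (C ∩ cubeFace free x0 = ∅ ∨ cubeFace free x0 ⊆ C)

section Aux

variable {d d' : ℕ}

noncomputable def emb (free : Finset (Fin d)) (x0 : Fin d → Bool) (φ : Fin d' → Fin d)
    (y : Fin d' → Bool) : Fin d → Bool :=
  fun i => if h : ∃ j, φ j = i then y h.choose else x0 i

def proj (φ : Fin d' → Fin d) (x : Fin d → Bool) : Fin d' → Bool := fun j => x (φ j)

def restrict (free : Finset (Fin d)) (x0 : Fin d → Bool) (φ : Fin d' → Fin d)
    (C : Set (Fin d → Bool)) : Set (Fin d' → Bool) :=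
  {y | ∃ x ∈ C ∩ cubeFace free x0, y = proj φ x}

variable {free : Finset (Fin d)} {x0 : Fin d → Bool} {φ : Fin d' → Fin d}

lemma phi_mem (hrange : Set.range φ = ↑free) (j : Fin d') : φ j ∈ free := by
  have : φ j ∈ Set.range φ := ⟨j, rfl⟩
  rw [hrange] at this; exact_mod_cast this

lemma exists_phi (hrange : Set.range φ = ↑free) {i : Fin d} (hi : i ∈ free) :
    ∃ j, φ j = i := by
  have : i ∈ Set.range φ := by rw [hrange]; exact_mod_cast hi
  exact this

lemma not_exists_phi (hrange : Set.range φ = ↑free) {i : Fin d} (hi : i ∉ free) :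
    ¬ ∃ j, φ j = i := by
  rintro ⟨j, rfl⟩; exact hi (phi_mem hrange j)

lemma emb_apply_phi (hφ : Function.Injective φ) (y : Fin d' → Bool) (j : Fin d') :
    emb free x0 φ y (φ j) = y j := by
  have h : ∃ j', φ j' = φ j := ⟨j, rfl⟩
  simp only [emb, dif_pos h]
  congr 1
  exact hφ h.choose_spec

lemma emb_apply_notfree (hrange : Set.range φ = ↑free) (y : Fin d' → Bool)
    {i : Fin d} (hi : i ∉ free) : emb free x0 φ y i = x0 i := by
  simp only [emb, dif_neg (not_exists_phi hrange hi)]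

lemma mem_emb_face (hrange : Set.range φ = ↑free) (y : Fin d' → Bool) :
    emb free x0 φ y ∈ cubeFace free x0 :=
  fun i hi => emb_apply_notfree hrange y hi

lemma proj_emb (hφ : Function.Injective φ) (hrange : Set.range φ = ↑free)
    (y : Fin d' → Bool) : proj φ (emb free x0 φ y) = y := by
  funext j
  exact emb_apply_phi hφ y j

lemma emb_proj (hφ : Function.Injective φ) (hrange : Set.range φ = ↑free) {x : Fin d → Bool}
    (hx : x ∈ cubeFace free x0) : emb free x0 φ (proj φ x) = x := by
  funext i
  by_cases hi : i ∈ free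
  · obtain ⟨j, rfl⟩ := exists_phi hrange hi
    exact emb_apply_phi hφ _ j
  · rw [emb_apply_notfree hrange _ hi]
    exact (hx i hi).symm

lemma proj_injOn (hφ : Function.Injective φ) (hrange : Set.range φ = ↑free)
    {x y : Fin d → Bool}
    (hx : x ∈ cubeFace free x0) (hy : y ∈ cubeFace free x0)
    (h : proj φ x = proj φ y) : x = y := by
  rw [← emb_proj hφ hrange hx, ← emb_proj hφ hrange hy, h]

lemma adj_proj (hφ : Function.Injective φ) (hrange : Set.range φ = ↑free)
    {a b : Fin d → Bool} (ha : a ∈ cubeFace free x0) (hb : b ∈ cubeFace free x0)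
    (h : cubeAdj a b) : cubeAdj (proj φ a) (proj φ b) := by
  obtain ⟨i, hi, hu⟩ := h
  have hif : i ∈ free := by
    by_contra hif
    exact hi ((ha i hif).trans (hb i hif).symm)
  obtain ⟨j, hj⟩ : ∃ j, φ j = i := by
    have : i ∈ Set.range φ := by rw [hrange]; exact_mod_cast hif
    exact this
  refine ⟨j, ?_, ?_⟩
  · simpa [proj, hj] using hi
  · intro j' hj'
    have : φ j' = i := hu _ hj'
    exact hφ (this.trans hj.symm)

lemma subface_sub (hrange : Set.range φ = ↑free) (free' : Finset (Fin d'))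
    (y0 : Fin d' → Bool) :
    cubeFace (free'.image φ) (emb free x0 φ y0) ⊆ cubeFace free x0 := by
  intro x hx i hi
  have h1 : i ∉ free'.image φ := by
    intro hmem
    obtain ⟨j, _, hj⟩ := Finset.mem_image.mp hmem
    exact hi (hj ▸ phi_mem hrange j)
  rw [hx i h1, emb_apply_notfree hrange _ hi]

lemma mem_subface_iff (hφ : Function.Injective φ) (hrange : Set.range φ = ↑free)
    (free' : Finset (Fin d')) (y0 : Fin d' → Bool) {x : Fin d → Bool}
    (hx : x ∈ cubeFace free x0) :
    x ∈ cubeFace (free'.image φ) (emb free x0 φ y0) ↔ proj φ x ∈ cubeFace free' y0 := by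
  constructor
  · intro h j hj
    have hji : φ j ∉ free'.image φ := by
      intro hmem
      obtain ⟨j', hj', hjj⟩ := Finset.mem_image.mp hmem
      exact hj (hφ hjj ▸ hj')
    have := h (φ j) hji
    simp only [proj]
    rw [this, emb_apply_phi hφ y0 j]
  · intro h i hi
    by_cases hif : i ∈ free
    · obtain ⟨j, hj⟩ : ∃ j, φ j = i := by
        have : i ∈ Set.range φ := by rw [hrange]; exact_mod_cast hif
        exact this
      have hjf : j ∉ free' := by
        intro hjf
        exact hi (Finset.mem_image.mpr ⟨j, hjf, hj⟩)
      have := h j hjf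
      simp only [proj] at this
      rw [← hj, this, emb_apply_phi hφ y0 j]
    · rw [hx i hif, emb_apply_notfree hrange _ hif]

lemma path_proj (hφ : Function.Injective φ) (hrange : Set.range φ = ↑free)
    (S : Set (Fin d → Bool)) (hS : S ⊆ cubeFace free x0) {x y : Fin d → Bool}
    (hx : x ∈ S) (h : Relation.ReflTransGen (fun a b => b ∈ S ∧ cubeAdj a b) x y) :
    y ∈ S ∧ Relation.ReflTransGen (fun a b => b ∈ proj φ '' S ∧ cubeAdj a b)
      (proj φ x) (proj φ y) := by
  induction h with
  | refl => exact ⟨hx, Relation.ReflTransGen.refl⟩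
  | tail hxb hbc ih =>
    refine ⟨hbc.1, ih.2.tail ⟨⟨_, hbc.1, rfl⟩, ?_⟩⟩
    exact adj_proj hφ hrange (hS ih.1) (hS hbc.1) hbc.2

lemma connIn_image (hφ : Function.Injective φ) (hrange : Set.range φ = ↑free)
    (S : Set (Fin d → Bool)) (hS : S ⊆ cubeFace free x0) (h : ConnIn S) :
    ConnIn (proj φ '' S) := by
  rintro _ ⟨x, hx, rfl⟩ _ ⟨y, hy, rfl⟩
  exact (path_proj hφ hrange S hS hx (h x hx y hy)).2

lemma restrict_inter_eq (hφ : Function.Injective φ) (hrange : Set.range φ = ↑free)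
    (C : Set (Fin d → Bool)) (free' : Finset (Fin d')) (y0 : Fin d' → Bool) :
    restrict free x0 φ C ∩ cubeFace free' y0 =
      proj φ '' (C ∩ cubeFace (free'.image φ) (emb free x0 φ y0)) := by
  ext y
  constructor
  · rintro ⟨⟨x, ⟨hxC, hxF⟩, rfl⟩, hy⟩
    exact ⟨x, ⟨hxC, (mem_subface_iff hφ hrange free' y0 hxF).mpr hy⟩, rfl⟩
  · rintro ⟨x, ⟨hxC, hxF⟩, rfl⟩
    have hxF' := subface_sub hrange free' y0 hxF
    exact ⟨⟨x, ⟨hxC, hxF'⟩, rfl⟩, (mem_subface_iff hφ hrange free' y0 hxF').mp hxF⟩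

lemma restrict_diff_eq (hφ : Function.Injective φ) (hrange : Set.range φ = ↑free)
    (C : Set (Fin d → Bool)) (free' : Finset (Fin d')) (y0 : Fin d' → Bool) :
    cubeFace free' y0 \ restrict free x0 φ C =
      proj φ '' (cubeFace (free'.image φ) (emb free x0 φ y0) \ C) := by
  ext y
  constructor
  · rintro ⟨hy, hyC⟩
    refine ⟨emb free x0 φ y, ⟨?_, ?_⟩, proj_emb hφ hrange y⟩
    · rw [mem_subface_iff hφ hrange free' y0 (mem_emb_face hrange y), proj_emb hφ hrange y]
      exact hy
    · intro hC
      exact hyC ⟨emb free x0 φ y, ⟨hC, mem_emb_face hrange y⟩, (proj_emb hφ hrange y).symm⟩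
  · rintro ⟨x, ⟨hxF, hxC⟩, rfl⟩
    have hxF' := subface_sub hrange free' y0 hxF
    refine ⟨(mem_subface_iff hφ hrange free' y0 hxF').mp hxF, ?_⟩
    rintro ⟨x', ⟨hx'C, hx'F⟩, hx'⟩
    exact hxC (proj_injOn hφ hrange hx'F hxF' hx'.symm ▸ hx'C)

lemma faceConds_restrict (hφ : Function.Injective φ) (hrange : Set.range φ = ↑free)
    (C : Set (Fin d → Bool)) (hf : FaceConds C) : FaceConds (restrict free x0 φ C) := by
  intro free' y0
  obtain ⟨h1, h2⟩ := hf (free'.image φ) (emb free x0 φ y0)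
  constructor
  · rw [restrict_inter_eq hφ hrange C free' y0]
    exact connIn_image hφ hrange _
      (fun x hx => subface_sub hrange free' y0 hx.2) h1
  · rw [restrict_diff_eq hφ hrange C free' y0]
    exact connIn_image hφ hrange _
      (fun x hx => subface_sub hrange free' y0 hx.1) h2

lemma multiConnected_restrict (hφ : Function.Injective φ) (hrange : Set.range φ = ↑free)
    (C : Set (Fin d → Bool)) (hC : MultiConnected C) :
    MultiConnected (restrict free x0 φ C) := by
  induction hC with
  | empty hf =>
    have he : restrict free x0 φ (∅ : Set (Fin d → Bool)) = ∅ := by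
      ext y; simp [restrict]
    rw [he]
    exact MultiConnected.empty (he ▸ faceConds_restrict hφ hrange ∅ hf)
  | step C g hg h hf ih =>
    by_cases hgF : g ∈ cubeFace free x0
    · refine MultiConnected.step _ (proj φ g) ⟨g, ⟨hg, hgF⟩, rfl⟩ ?_
        (faceConds_restrict hφ hrange C hf)
      have heq : restrict free x0 φ C \ {proj φ g} = restrict free x0 φ (C \ {g}) := by
        ext y
        constructor
        · rintro ⟨⟨x, ⟨hxC, hxF⟩, rfl⟩, hne⟩
          refine ⟨x, ⟨⟨hxC, ?_⟩, hxF⟩, rfl⟩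
          intro hxg
          exact hne (by rw [Set.mem_singleton_iff.mp hxg]; exact rfl)
        · rintro ⟨x, ⟨⟨hxC, hxg⟩, hxF⟩, rfl⟩
          refine ⟨⟨x, ⟨hxC, hxF⟩, rfl⟩, ?_⟩
          intro hpe
          exact hxg (proj_injOn hφ hrange hxF hgF (Set.mem_singleton_iff.mp hpe))
      rw [heq]; exact ih
    · have heq : restrict free x0 φ C = restrict free x0 φ (C \ {g}) := by
        ext y
        constructor
        · rintro ⟨x, ⟨hxC, hxF⟩, rfl⟩
          refine ⟨x, ⟨⟨hxC, ?_⟩, hxF⟩, rfl⟩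
          intro hxg
          exact hgF (Set.mem_singleton_iff.mp hxg ▸ hxF)
        · rintro ⟨x, ⟨⟨hxC, _⟩, hxF⟩, rfl⟩
          exact ⟨x, ⟨hxC, hxF⟩, rfl⟩
      rw [heq]; exact ih

end Aux

/-- Restriction of a multi-connected set to a face of the hypercube, after deleting
the coordinates constant on the face, is again multi-connected. -/
theorem multiConnected_face_restriction {d d' : ℕ} (C : Set (Fin d → Bool))
    (hC : MultiConnected C) (free : Finset (Fin d)) (x0 : Fin d → Bool)
    (φ : Fin d' → Fin d) (hφ : Function.Injective φ) (hrange : Set.range φ = ↑free) :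
    MultiConnected {y : Fin d' → Bool |
      ∃ x ∈ C ∩ cubeFace free x0, y = fun j => x (φ j)} :=
  multiConnected_restrict hφ hrange C hC
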